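/- arXiv:1504.02505 — 2 statements merged into one kernel-verified Lean document; each statement's English description precedes it below -/
import Mathlib

section
/- Let V and E be finite types and src, tgt : E → V maps with src e ≠ tgt e for every e ∈ E. Define the unsigned incidence matrix |A| : V × E → ℝ by |A|(v,e) = 1 if v = src e or v = tgt e, and |A|(v,e) = 0 otherwise. Assume the simple graph on V in which distinct vertices v, w are adjacent if and only if some edge e satisfies {src e, tgt e} = {v, w} is connected, and let S ⊆ V be a nonempty set of vertices. Then the rows {|A|(v,·) : v ∈ V, v ∉ S}, viewed as vectors in ℝ^E, are linearly independent. -/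
/-- For a connected gas network graph (finite directed graph without self-loops), the
unsigned incidence matrix with the rows corresponding to a nonempty set `S` of (slack)
vertices deleted has linearly independent rows. -/
theorem reduced_unsigned_incidence_rows_linearIndependent
    (V E : Type*) [Fintype V] [Fintype E] [DecidableEq V]
    (src tgt : E → V) (hloop : ∀ e, src e ≠ tgt e)
    (G : SimpleGraph V)
    (hG : ∀ v w : V, G.Adj v w ↔ v ≠ w ∧ ∃ e, ({src e, tgt e} : Set V) = {v, w})
    (hconn : G.Connected)
    (absA : V → E → ℝ)
    (habsA : ∀ v e, absA v e = if v = src e ∨ v = tgt e then 1 else 0)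
    (S : Set V) (hS : S.Nonempty) :
    LinearIndependent ℝ (fun v : {v : V // v ∉ S} => absA v.1) := by
  classical
  rw [Fintype.linearIndependent_iff]
  intro g hg i
  set c : V → ℝ := fun v => if h : v ∉ S then g ⟨v, h⟩ else 0 with hc
  have hcS : ∀ v ∈ S, c v = 0 := by intro v hv; simp [hc, hv]
  have hedge : ∀ e, c (src e) + c (tgt e) = 0 := by
    intro e
    have h1 : ∑ v : {v : V // v ∉ S}, g v * absA v.1 e = 0 := by
      have := congrFun hg e
      simpa [Finset.sum_apply] using this
    have h2 : ∑ v : V, c v * absA v e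
        = ∑ v : {v : V // v ∉ S}, g v * absA v.1 e := by
      have e1 : ∑ v : {v : V // v ∉ S}, g v * absA v.1 e
          = ∑ v : {v : V // v ∉ S}, c v.1 * absA v.1 e :=
        Finset.sum_congr rfl (fun x _ => by simp [hc, x.2])
      rw [e1, ← Finset.sum_subtype (Finset.univ.filter fun v => v ∉ S)
          (fun x => by simp) (fun v => c v * absA v e)]
      exact (Finset.sum_filter_of_ne (fun x _ hx => by
        by_contra hxS
        exact hx (show c x * absA x e = 0 by rw [hcS x hxS, zero_mul]))).symm
    have h3 : ∑ v : V, c v * absA v e = c (src e) + c (tgt e) := by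
      have : ∀ v : V, c v * absA v e
          = if v ∈ ({src e, tgt e} : Finset V) then c v else 0 := by
        intro v
        rw [habsA]
        by_cases h : v = src e ∨ v = tgt e <;> simp [h]
      rw [Finset.sum_congr rfl fun v _ => this v]
      rw [Finset.sum_ite_mem, Finset.univ_inter, Finset.sum_pair (hloop e)]
    rw [← h3, h2, h1]
  have hadj : ∀ v w, G.Adj v w → c w = - c v := by
    intro v w hvw
    obtain ⟨hne, e, he⟩ := (hG v w).1 hvw
    have h1 : src e ∈ ({v, w} : Set V) := he ▸ (by simp)
    have h2 : tgt e ∈ ({v, w} : Set V) := he ▸ (by simp)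
    simp only [Set.mem_insert_iff, Set.mem_singleton_iff] at h1 h2
    have heq := hedge e
    rcases h1 with h1 | h1 <;> rcases h2 with h2 | h2
    · exact absurd (h1.trans h2.symm) (hloop e)
    · rw [h1, h2] at heq; linarith
    · rw [h1, h2] at heq; linarith
    · exact absurd (h1.trans h2.symm) (hloop e)
  have hwalk : ∀ (u w : V) (p : G.Walk u w), |c u| = |c w| := by
    intro u w p
    induction p with
    | nil => rfl
    | cons h _ ih =>
      rw [← ih, hadj _ _ h, abs_neg]
  obtain ⟨s, hsS⟩ := hS
  have hzero : ∀ v, c v = 0 := by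
    intro v
    have := hwalk s v (hconn.preconnected s v).some
    rw [hcS s hsS, abs_zero] at this
    exact abs_eq_zero.mp this.symm
  have := hzero i.1
  simpa [hc, i.2] using this
end

section
/- Let V and E be finite types and src, tgt : E → V maps with src e ≠ tgt e for every e ∈ E. Define the unsigned incidence matrix |A| : V × E → ℝ by |A|(v,e) = 1 if v = src e or v = tgt e, and |A|(v,e) = 0 otherwise. Assume the simple graph on V in which distinct vertices v, w are adjacent if and only if some edge e satisfies {src e, tgt e} = {v, w} is connected, and let S ⊆ V be a nonempty set of vertices. Let Λ : E → ℝ assign a positive weight Λ_e > 0 to each edge, and define the matrix W indexed by the demand nodes D = V ∖ S by W(u,v) = Σ_{e∈E} |A|(u,e)·Λ_e·|A|(v,e). Then W is symmetric positive definite (xᵀWx > 0 for every nonzero x ∈ ℝ^D); in particular W is invertible. -/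
/-- For a connected gas network graph with nonempty slack-node set `S` and positive edge
weights `Λ`, the matrix `W = |A_d| Λ |A_d|ᵀ` over the demand nodes `D = V \ S`
(with `W(u,v) = Σ_e |A|(u,e) Λ_e |A|(v,e)`) is symmetric positive definite, and in
particular invertible. -/
theorem demand_node_weighted_gram_posDef
    (V E : Type*) [Fintype V] [Fintype E] [DecidableEq V]
    (src tgt : E → V) (hloop : ∀ e, src e ≠ tgt e)
    (G : SimpleGraph V)
    (hG : ∀ v w : V, G.Adj v w ↔ v ≠ w ∧ ∃ e, ({src e, tgt e} : Set V) = {v, w})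
    (hconn : G.Connected)
    (absA : V → E → ℝ)
    (habsA : ∀ v e, absA v e = if v = src e ∨ v = tgt e then 1 else 0)
    (S : Finset V) (hS : S.Nonempty)
    (Λ : E → ℝ) (hΛ : ∀ e, 0 < Λ e)
    (W : Matrix {v : V // v ∉ S} {v : V // v ∉ S} ℝ)
    (hW : ∀ u v : {v : V // v ∉ S}, W u v = ∑ e, absA u.1 e * Λ e * absA v.1 e) :
    W.PosDef ∧ IsUnit W := by
  have hpd : W.PosDef := by
    rw [Matrix.posDef_iff_dotProduct_mulVec]
    constructor
    · -- symmetry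
      ext i j
      simp only [Matrix.conjTranspose_apply, star_trivial, hW]
      exact Finset.sum_congr rfl (fun e _ => by ring)
    · intro x hx
      -- the quadratic form
      set g : E → ℝ := fun e => ∑ u : {v : V // v ∉ S}, absA u.1 e * x u with hg
      have hquad : dotProduct (star x) (W.mulVec x) = ∑ e, Λ e * (g e * g e) := by
        simp only [star_trivial, dotProduct, Matrix.mulVec, dotProduct, hW]
        calc (∑ u : {v : V // v ∉ S}, x u *
                ∑ v : {v : V // v ∉ S}, (∑ e, absA u.1 e * Λ e * absA v.1 e) * x v)
            = ∑ u : {v : V // v ∉ S}, ∑ v : {v : V // v ∉ S}, ∑ e,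
                Λ e * ((absA u.1 e * x u) * (absA v.1 e * x v)) := by
              refine Finset.sum_congr rfl (fun u _ => ?_)
              rw [Finset.mul_sum]
              refine Finset.sum_congr rfl (fun v _ => ?_)
              rw [Finset.sum_mul, Finset.mul_sum]
              exact Finset.sum_congr rfl (fun e _ => by ring)
          _ = ∑ e, ∑ u : {v : V // v ∉ S}, ∑ v : {v : V // v ∉ S},
                Λ e * ((absA u.1 e * x u) * (absA v.1 e * x v)) := by
              have s1 : (∑ u : {v : V // v ∉ S}, ∑ v : {v : V // v ∉ S}, ∑ e,
                    Λ e * ((absA u.1 e * x u) * (absA v.1 e * x v)))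
                  = ∑ u : {v : V // v ∉ S}, ∑ e, ∑ v : {v : V // v ∉ S},
                    Λ e * ((absA u.1 e * x u) * (absA v.1 e * x v)) :=
                Finset.sum_congr rfl (fun u _ => Finset.sum_comm)
              have s2 : (∑ u : {v : V // v ∉ S}, ∑ e, ∑ v : {v : V // v ∉ S},
                    Λ e * ((absA u.1 e * x u) * (absA v.1 e * x v)))
                  = ∑ e, ∑ u : {v : V // v ∉ S}, ∑ v : {v : V // v ∉ S},
                    Λ e * ((absA u.1 e * x u) * (absA v.1 e * x v)) :=
                Finset.sum_comm
              exact s1.trans s2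
          _ = ∑ e, Λ e * (g e * g e) := by
              refine Finset.sum_congr rfl (fun e _ => ?_)
              have hge' : g e = ∑ u : {v : V // v ∉ S}, absA u.1 e * x u := rfl
              rw [hge', Finset.sum_mul_sum, Finset.mul_sum]
              refine Finset.sum_congr rfl (fun u _ => ?_)
              rw [Finset.mul_sum]
      rw [hquad]
      have hnn : ∀ e ∈ Finset.univ, (0:ℝ) ≤ Λ e * (g e * g e) :=
        fun e _ => mul_nonneg (hΛ e).le (mul_self_nonneg _)
      rcases lt_or_eq_of_le (Finset.sum_nonneg hnn) with h | h
      · exact h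
      · exfalso
        -- all g e = 0
        have hge : ∀ e, g e = 0 := by
          intro e
          have := (Finset.sum_eq_zero_iff_of_nonneg hnn).mp h.symm e (Finset.mem_univ e)
          have h2 : g e * g e = 0 := by
            rcases mul_eq_zero.mp this with h' | h'
            · exact absurd h' (hΛ e).ne'
            · exact h'
          exact mul_self_eq_zero.mp h2
        -- extend x by zero
        set f : V → ℝ := fun v => if h : v ∉ S then x ⟨v, h⟩ else 0 with hf
        have hgf : ∀ e, f (src e) + f (tgt e) = 0 := by
          intro e
          have h1 : (∑ u : {v : V // v ∉ S}, absA u.1 e * x u) = ∑ v : V, absA v e * f v := by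
            have hxf : ∀ u : {v : V // v ∉ S}, absA u.1 e * x u = absA u.1 e * f u.1 := by
              intro u
              have : f u.1 = x u := by
                have : (if h : (u : V) ∉ S then x ⟨u, h⟩ else 0) = f u.1 := rfl
                rw [← this, dif_pos u.2]
              rw [this]
            rw [Finset.sum_congr rfl (fun u _ => hxf u)]
            rw [← Finset.sum_subtype (Finset.univ.filter (· ∉ S))
              (p := fun v => v ∉ S) (by simp) (fun v => absA v e * f v)]
            rw [Finset.sum_filter]
            refine Finset.sum_congr rfl (fun v _ => ?_)
            by_cases hv : v ∉ S
            · simp [hv]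
            · have : f v = 0 := by
                have h0 : (if h : v ∉ S then x ⟨v, h⟩ else 0) = f v := rfl
                rw [← h0, dif_neg hv]
              simp [hv, this]
          have h2 : (∑ v : V, absA v e * f v) = f (src e) + f (tgt e) := by
            have : ∀ v : V, absA v e * f v =
                if v ∈ ({src e, tgt e} : Finset V) then f v else 0 := by
              intro v
              rw [habsA]
              by_cases hv : v = src e ∨ v = tgt e
              · simp [hv, Finset.mem_insert, Finset.mem_singleton]
              · simp [hv, Finset.mem_insert, Finset.mem_singleton,
                  not_or.mp hv]
            rw [Finset.sum_congr rfl (fun v _ => this v), Finset.sum_ite_mem,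
              Finset.univ_inter, Finset.sum_pair (hloop e)]
          rw [← h2, ← h1]
          exact hge e
        -- adjacency relation on f
        have hadj : ∀ v w : V, G.Adj v w → f v + f w = 0 := by
          intro v w hvw
          obtain ⟨hne, e, he⟩ := (hG v w).mp hvw
          have := Set.pair_eq_pair_iff.mp he
          rcases this with ⟨h1, h2⟩ | ⟨h1, h2⟩
          · rw [← h1, ← h2]; exact hgf e
          · rw [← h1, ← h2, add_comm]; exact hgf e
        -- along a walk, |f| is preserved
        have hwalk : ∀ (v w : V), G.Walk v w → f v = f w ∨ f v = -f w := by
          intro v w p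
          induction p with
          | nil => exact Or.inl rfl
          | cons h p ih =>
            have h1 := hadj _ _ h
            rcases ih with h2 | h2
            · right; linarith
            · left; linarith
        obtain ⟨s, hs⟩ := hS
        have hfs : f s = 0 := by simp [hf, hs]
        have hfv : ∀ v : V, f v = 0 := by
          intro v
          obtain ⟨p⟩ := hconn.preconnected v s
          rcases hwalk v s p with h1 | h1 <;> simp [h1, hfs]
        apply hx
        funext u
        have h3 : (if h : (u : V) ∉ S then x ⟨u, h⟩ else 0) = 0 := hfv u.1
        rw [dif_pos u.2] at h3
        simpa using h3
  refine ⟨hpd, ?_⟩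
  exact (Matrix.isUnit_iff_isUnit_det W).mpr hpd.det_pos.ne'.isUnit
end
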